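/- arXiv:0804.0986 — 2 statements merged into one kernel-verified Lean document; each statement's English description precedes it below -/
import Mathlib

section
/- Let 0 < r < r′. Let T be a geodesic triangle on the sphere S_r with angles θ₁, θ₂, θ₃, and suppose T′ is a geodesic triangle on the sphere S_{r′} with the same three side lengths as T, with corresponding angles θ₁′, θ₂′, θ₃′ (opposite sides of equal length). Then θᵢ > θᵢ′ for each i ∈ {1,2,3}. -/
open Real
open scoped RealInnerProductSpace


noncomputable section

/-- Points of ℝ³. -/
abbrev E3 := EuclideanSpace ℝ (Fin 3)

/-- Points of the Euclidean plane. -/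
abbrev E2 := EuclideanSpace ℝ (Fin 2)

/-- `p` lies on the sphere `S_r` of radius `r` centered at the origin in ℝ³. -/
def onSphere (r : ℝ) (p : E3) : Prop := ‖p‖ = r

/-- Geodesic (great-circle) distance on the sphere of radius `r`:
`d_r(p,q) = r · arccos(⟪p,q⟫ / r²)`. -/
def sdist (r : ℝ) (p q : E3) : ℝ := r * Real.arccos ((inner ℝ p q : ℝ) / r ^ 2)

/-- The tangent vector at `p` pointing along the minimal geodesic arc from `p`
towards `q` (the component of `q` orthogonal to `p`). -/
def sTangent (p q : E3) : E3 := q - (((inner ℝ q p : ℝ)) / ‖p‖ ^ 2) • p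

/-- The spherical angle at vertex `v` between the minimal geodesic arcs `vp` and `vq`,
i.e. the angle between the tangent directions of the two arcs at `v`; it lies in `[0, π]`. -/
def sAngle (p v q : E3) : ℝ :=
  InnerProductGeometry.angle (sTangent v p) (sTangent v q)

/-- A geodesic triangle on the sphere of radius `r`: three vertices on the sphere,
pairwise neither equal nor antipodal, and not all lying on one great circle
(equivalently, linearly independent in ℝ³). -/
def SphTriangle (r : ℝ) (a b c : E3) : Prop :=
  onSphere r a ∧ onSphere r b ∧ onSphere r c ∧
  a ≠ b ∧ a ≠ c ∧ b ≠ c ∧ a ≠ -b ∧ a ≠ -c ∧ b ≠ -c ∧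
  LinearIndependent ℝ ![a, b, c]

lemma aux_tsc {t : ℝ} (ht : 0 ≤ t) (ht' : t ≤ π) : sin t * cos t ≤ t := by
  rcases le_or_gt (cos t) 0 with h | h
  · have : sin t * cos t ≤ 0 := mul_nonpos_of_nonneg_of_nonpos (Real.sin_nonneg_of_nonneg_of_le_pi ht ht') h
    linarith
  · nlinarith [Real.sin_le ht, Real.sin_nonneg_of_nonneg_of_le_pi ht ht', h.le, Real.cos_le_one t]

lemma key1 {p q : ℝ} (hp : 0 < p) (hq : 0 < q) (hpq : p + q < π) :
    1 + (p + q) * cos (p + q) / sin (p + q) ≤ p * cos p / sin p + q * cos q / sin q := by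
  have hsp : 0 < sin p := Real.sin_pos_of_pos_of_lt_pi hp (by linarith)
  have hsq : 0 < sin q := Real.sin_pos_of_pos_of_lt_pi hq (by linarith)
  have hspq : 0 < sin (p + q) := Real.sin_pos_of_pos_of_lt_pi (by linarith) hpq
  have hexp : sin p * cos q + cos p * sin q ≠ 0 := by rw [← Real.sin_add]; exact hspq.ne'
  rw [← sub_nonneg]
  have hE : p * cos p / sin p + q * cos q / sin q - (1 + (p + q) * cos (p + q) / sin (p + q))
      = ((sin q)^2 * (p - sin p * cos p) + (sin p)^2 * (q - sin q * cos q))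
        / (sin p * sin q * sin (p + q)) := by
    rw [Real.sin_add, Real.cos_add]
    field_simp
    linear_combination p * sin q ^ 2 * (Real.sin_sq_add_cos_sq p) + q * sin p ^ 2 * (Real.sin_sq_add_cos_sq q)
  rw [hE]
  have h1 : sin p * cos p ≤ p := aux_tsc hp.le (by linarith)
  have h2 : sin q * cos q ≤ q := aux_tsc hq.le (by linarith)
  apply div_nonneg _ (by positivity)
  have := sq_nonneg (sin p)
  have := sq_nonneg (sin q)
  nlinarith

lemma key2 {t : ℝ} (ht : 0 < t) (ht' : t < π) : t * cos t / sin t < 1 := by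
  have hst : 0 < sin t := Real.sin_pos_of_pos_of_lt_pi ht ht'
  rw [div_lt_one hst]
  rcases le_or_gt (cos t) 0 with h | h
  · nlinarith
  · have hlt : t < π / 2 := by
      by_contra hge
      exact absurd (Real.cos_nonpos_of_pi_div_two_le_of_le (not_lt.1 hge) (by linarith)) (not_le.2 h)
    have := Real.lt_tan ht hlt
    rw [Real.tan_eq_sin_div_cos, lt_div_iff₀ h] at this
    linarith

lemma key3 {x y z : ℝ} (hx : 0 < x) (hy : 0 < y) (hz : 0 < z) (hs : x + y + z < π) :
    (x + z) * cos (x + z) / sin (x + z) + (x + y) * cos (x + y) / sin (x + y)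
      < y * cos y / sin y + z * cos z / sin z := by
  have h1 := key1 hx hz (by linarith)
  have h2 := key1 hx hy (by linarith)
  have h3 := key2 hx (by linarith)
  linarith

lemma sin_ratio {u v w l : ℝ} (hu : 0 < u) (hv : 0 < v) (hw : 0 < w)
    (hs : u + v + w < π) (hl0 : 0 < l) (hl1 : l < 1) :
    sin (l*v) * sin (l*w) * (sin (u+w) * sin (u+v))
      < sin v * sin w * (sin (l*(u+w)) * sin (l*(u+v))) := by
  -- positivity of all the sines involved
  have hsin : ∀ c t : ℝ, 0 < c → c < π → l ≤ t → t ≤ 1 → 0 < sin (t*c) := by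
    intro c t hc hcπ hlt ht1
    apply Real.sin_pos_of_pos_of_lt_pi (by nlinarith)
    nlinarith
  set L : ℝ → ℝ := fun t => log (sin (t*v)) + log (sin (t*w))
      - log (sin (t*(u+w))) - log (sin (t*(u+v))) with hL
  have hder : ∀ t, l ≤ t → t ≤ 1 → HasDerivAt L
      (v * cos (t*v) / sin (t*v) + w * cos (t*w) / sin (t*w)
        - (u+w) * cos (t*(u+w)) / sin (t*(u+w)) - (u+v) * cos (t*(u+v)) / sin (t*(u+v))) t := by
    intro t htl ht1
    have hone : ∀ c : ℝ, 0 < c → c < π →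
        HasDerivAt (fun t => log (sin (t*c))) (c * cos (t*c) / sin (t*c)) t := by
      intro c hc hcπ
      have h1 : HasDerivAt (fun t : ℝ => t*c) c t := hasDerivAt_mul_const c
      have h2 := h1.sin
      have h3 := h2.log (hsin c t hc hcπ htl ht1).ne'
      convert h3 using 1
      ring
    exact (((hone v hv (by linarith)).add (hone w hw (by linarith))).sub
      (hone (u+w) (by linarith) (by linarith))).sub (hone (u+v) (by linarith) (by linarith))
  have hmono : StrictMonoOn L (Set.Icc l 1) := by
    apply strictMonoOn_of_deriv_pos (convex_Icc l 1)
    · exact fun t ht => ((hder t ht.1 ht.2).continuousAt).continuousWithinAt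
    · intro t ht
      rw [interior_Icc] at ht
      rw [(hder t ht.1.le ht.2.le).deriv]
      have ht0 : 0 < t := lt_trans hl0 ht.1
      have h3 := key3 (x := t*u) (y := t*v) (z := t*w) (mul_pos ht0 hu) (mul_pos ht0 hv)
        (mul_pos ht0 hw) (by nlinarith [mul_pos (sub_pos.2 ht.2) (by linarith : (0:ℝ) < u+v+w)])
      have e1 : t*u + t*w = t*(u+w) := by ring
      have e2 : t*u + t*v = t*(u+v) := by ring
      rw [e1, e2] at h3
      have e3 : ∀ c : ℝ, (t*c) * cos (t*c) / sin (t*c) = t * (c * cos (t*c) / sin (t*c)) := by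
        intro c; ring
      rw [e3, e3, e3, e3] at h3
      nlinarith
  have hlt := hmono (Set.left_mem_Icc.2 hl1.le) (Set.right_mem_Icc.2 hl1.le) hl1
  simp only [hL, one_mul] at hlt
  -- rearrange logs
  have p1 := hsin v l hv (by linarith) le_rfl hl1.le
  have p2 := hsin w l hw (by linarith) le_rfl hl1.le
  have p3 := hsin (u+w) l (by linarith) (by linarith) le_rfl hl1.le
  have p4 := hsin (u+v) l (by linarith) (by linarith) le_rfl hl1.le
  have q1 := hsin v 1 hv (by linarith) hl1.le le_rfl
  have q2 := hsin w 1 hw (by linarith) hl1.le le_rfl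
  have q3 := hsin (u+w) 1 (by linarith) (by linarith) hl1.le le_rfl
  have q4 := hsin (u+v) 1 (by linarith) (by linarith) hl1.le le_rfl
  rw [one_mul] at q1 q2 q3 q4
  have hlog : log (sin (l*v)) + log (sin (l*w)) + (log (sin (u+w)) + log (sin (u+v)))
      < log (sin v) + log (sin w) + (log (sin (l*(u+w))) + log (sin (l*(u+v)))) := by linarith
  rw [← Real.log_mul p1.ne' p2.ne', ← Real.log_mul q3.ne' q4.ne',
      ← Real.log_mul q1.ne' q2.ne', ← Real.log_mul p3.ne' p4.ne',
      ← Real.log_mul (mul_pos p1 p2).ne' (mul_pos q3 q4).ne',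
      ← Real.log_mul (mul_pos q1 q2).ne' (mul_pos p3 p4).ne'] at hlog
  exact (Real.log_lt_log_iff (mul_pos (mul_pos p1 p2) (mul_pos q3 q4))
    (mul_pos (mul_pos q1 q2) (mul_pos p3 p4))).1 hlog
lemma tangent_inner {a : E3} (ha : a ≠ 0) (b c : E3) :
    ⟪sTangent a b, sTangent a c⟫ = ⟪b, c⟫ - ⟪a, b⟫ * ⟪a, c⟫ / ‖a‖ ^ 2 := by
  have h0 : ‖a‖ ≠ 0 := norm_ne_zero_iff.2 ha
  unfold sTangent
  simp only [inner_sub_left, inner_sub_right, real_inner_smul_left, real_inner_smul_right,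
    real_inner_self_eq_norm_sq]
  rw [real_inner_comm b a, real_inner_comm c a]
  field_simp
  ring

lemma lindep_of_tangent {a b c : E3} (h : LinearIndependent ℝ ![a, b, c]) (μ : ℝ)
    (he : sTangent a c = μ • sTangent a b) : False := by
  unfold sTangent at he
  set t : ℝ := (inner ℝ c a : ℝ) / ‖a‖ ^ 2 with hts
  set s : ℝ := (inner ℝ b a : ℝ) / ‖a‖ ^ 2 with hss
  have hc : (t - μ*s) • a + μ • b - (1:ℝ) • c = 0 := by
    have h2 : c - t • a = μ • (b - s • a) := he
    rw [smul_sub, smul_smul] at h2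
    rw [sub_smul, one_smul]
    have h3 : c = t • a + (μ • b - (μ*s) • a) := by rw [← h2]; abel
    rw [h3]; abel
  have := Fintype.linearIndependent_iff.1 h ![t - μ*s, μ, -1]
    (by simpa [Fin.sum_univ_three, neg_smul, one_smul, ← sub_eq_add_neg] using hc) 2
  norm_num [Matrix.cons_val_two, Matrix.tail_cons, Matrix.head_cons] at this

lemma inner_abs_lt {r : ℝ} (hr : 0 < r) {a b : E3} (ha : ‖a‖ = r) (hb : ‖b‖ = r)
    (h1 : a ≠ b) (h2 : a ≠ -b) : |⟪a, b⟫| < r ^ 2 := by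
  have e1 : ‖a - b‖ ^ 2 = r^2 - 2*⟪a,b⟫ + r^2 := by rw [norm_sub_sq_real, ha, hb]
  have e2 : ‖a + b‖ ^ 2 = r^2 + 2*⟪a,b⟫ + r^2 := by rw [norm_add_sq_real, ha, hb]
  have p1 : 0 < ‖a - b‖ ^ 2 := by
    have := norm_pos_iff.2 (sub_ne_zero.2 h1); positivity
  have p2 : 0 < ‖a + b‖ ^ 2 := by
    have hne : a + b ≠ 0 := fun h => h2 (eq_neg_of_add_eq_zero_left h)
    have := norm_pos_iff.2 hne; positivity
  rw [abs_lt]; constructor <;> nlinarith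

lemma tangent_norm {r : ℝ} (hr : 0 < r) {a b : E3} (ha : ‖a‖ = r) (hb : ‖b‖ = r)
    (hab : |⟪a, b⟫| < r ^ 2) :
    ‖sTangent a b‖ = r * Real.sin (Real.arccos (⟪a, b⟫ / r ^ 2)) := by
  have ha0 : a ≠ 0 := by intro h; rw [h, norm_zero] at ha; exact (hr.ne ha).elim
  have h1 : ‖sTangent a b‖ ^ 2 = r^2 - ⟪a,b⟫^2 / r^2 := by
    rw [← real_inner_self_eq_norm_sq, tangent_inner ha0, real_inner_self_eq_norm_sq, ha, hb]
    ring
  have h2 : ‖sTangent a b‖ = Real.sqrt (r^2 - ⟪a,b⟫^2 / r^2) := by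
    rw [← h1, Real.sqrt_sq (norm_nonneg _)]
  rw [h2, Real.sin_arccos]
  rw [show r^2 - ⟪a,b⟫^2/r^2 = r^2 * (1 - (⟪a,b⟫/r^2)^2) by field_simp]
  rw [Real.sqrt_mul (sq_nonneg r), Real.sqrt_sq hr.le]

lemma cos_sAngle_eq {r : ℝ} (hr : 0 < r) {a b c : E3} (ha : ‖a‖ = r) (hb : ‖b‖ = r) (hc : ‖c‖ = r)
    (hab : |⟪a, b⟫| < r ^ 2) (hac : |⟪a, c⟫| < r ^ 2) :
    Real.cos (sAngle b a c) *
      (Real.sin (Real.arccos (⟪a, b⟫ / r ^ 2)) * Real.sin (Real.arccos (⟪a, c⟫ / r ^ 2)))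
      = ⟪b, c⟫ / r ^ 2 - (⟪a, b⟫ / r ^ 2) * (⟪a, c⟫ / r ^ 2) := by
  have ha0 : a ≠ 0 := by intro h; rw [h, norm_zero] at ha; exact (hr.ne ha).elim
  have hsb : 0 < Real.sin (Real.arccos (⟪a, b⟫ / r ^ 2)) := by
    rw [Real.sin_arccos]
    have h' : |⟪a, b⟫ / r ^ 2| < 1 := by
      rw [abs_div, abs_of_pos (pow_pos hr 2), div_lt_one (pow_pos hr 2)]; exact hab
    apply Real.sqrt_pos.2
    nlinarith [(abs_lt.1 h').1, (abs_lt.1 h').2]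
  have hsc : 0 < Real.sin (Real.arccos (⟪a, c⟫ / r ^ 2)) := by
    rw [Real.sin_arccos]
    have h' : |⟪a, c⟫ / r ^ 2| < 1 := by
      rw [abs_div, abs_of_pos (pow_pos hr 2), div_lt_one (pow_pos hr 2)]; exact hac
    apply Real.sqrt_pos.2
    nlinarith [(abs_lt.1 h').1, (abs_lt.1 h').2]
  have hcos := InnerProductGeometry.cos_angle (sTangent a b) (sTangent a c)
  rw [sAngle, hcos, tangent_inner ha0, tangent_norm hr ha hb hab, tangent_norm hr ha hc hac]
  rw [ha]
  set x : ℝ := ⟪b, c⟫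
  set y : ℝ := ⟪a, b⟫
  set z : ℝ := ⟪a, c⟫
  set S1 := Real.sin (Real.arccos (y / r ^ 2))
  set S2 := Real.sin (Real.arccos (z / r ^ 2))
  field_simp

lemma sAngle_cos_lt {a b c : E3} (h : LinearIndependent ℝ ![a, b, c]) :
    -1 < Real.cos (sAngle b a c) ∧ Real.cos (sAngle b a c) < 1 := by
  have h0 : sAngle b a c ≠ 0 := by
    intro he
    rcases InnerProductGeometry.angle_eq_zero_iff.1 he with ⟨-, μ, hμ, heq⟩
    exact lindep_of_tangent h μ heq
  have hπ : sAngle b a c ≠ π := by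
    intro he
    rcases InnerProductGeometry.angle_eq_pi_iff.1 he with ⟨-, μ, hμ, heq⟩
    exact lindep_of_tangent h μ heq
  have h1 : 0 ≤ sAngle b a c := InnerProductGeometry.angle_nonneg _ _
  have h2 : sAngle b a c ≤ π := InnerProductGeometry.angle_le_pi _ _
  constructor
  · have := Real.cos_lt_cos_of_nonneg_of_le_pi h1 le_rfl (lt_of_le_of_ne h2 hπ)
    rw [Real.cos_pi] at this; exact this
  · have := Real.cos_lt_cos_of_nonneg_of_le_pi le_rfl h2 (lt_of_le_of_ne h1 (Ne.symm h0))
    rw [Real.cos_zero] at this; exact this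

lemma tri_of_cos {α β γ : ℝ} (hα0 : 0 < α) (hαπ : α < π) (hβ0 : 0 < β) (hβπ : β < π)
    (hγ0 : 0 < γ) (hγπ : γ < π)
    (h : Real.cos β * Real.cos γ - Real.sin β * Real.sin γ < Real.cos α) :
    α < β + γ ∧ α + β + γ < 2 * π := by
  have h' : Real.cos (β + γ) < Real.cos α := by rw [Real.cos_add]; linarith
  constructor
  · rcases le_or_gt π (β + γ) with hc | hc
    · linarith
    · by_contra hle
      push_neg at hle
      exact absurd (Real.cos_le_cos_of_nonneg_of_le_pi (by linarith : (0:ℝ) ≤ β + γ) hαπ.le hle)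
        (by linarith)
  · rcases le_or_gt (β + γ) π with hc | hc
    · linarith
    · have e : Real.cos (2*π - (β+γ)) = Real.cos (β+γ) := by
        rw [Real.cos_sub, Real.cos_two_pi, Real.sin_two_pi]; ring
      by_contra hle
      push_neg at hle
      have h2 : Real.cos α ≤ Real.cos (2*π - (β+γ)) :=
        Real.cos_le_cos_of_nonneg_of_le_pi (by linarith : (0:ℝ) ≤ 2*π - (β+γ)) hαπ.le
          (by linarith)
      rw [e] at h2
      linarith

lemma arccos_mem {x : ℝ} (h : |x| < 1) : 0 < Real.arccos x ∧ Real.arccos x < π := by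
  refine ⟨Real.arccos_pos.2 (abs_lt.1 h).2, ?_⟩
  refine lt_of_le_of_ne (Real.arccos_le_pi x) (fun he => ?_)
  have := Real.arccos_eq_pi.1 he
  linarith [(abs_lt.1 h).1]

lemma cos_identity (u v w : ℝ) :
    Real.cos (v+w) - Real.cos (u+v) * Real.cos (u+w)
      = Real.sin (u+v) * Real.sin (u+w) - 2 * (Real.sin v * Real.sin w) := by
  rw [Real.cos_add, Real.cos_add, Real.cos_add, Real.sin_add, Real.sin_add]
  linear_combination (- Real.cos v * Real.cos w - Real.sin v * Real.sin w) *
    (Real.sin_sq_add_cos_sq u)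

lemma li_swap {a b c : E3} (h : LinearIndependent ℝ ![a,b,c]) :
    LinearIndependent ℝ ![b,a,c] := by
  rw [Fintype.linearIndependent_iff] at h ⊢
  intro g hg
  have h' := h ![g 1, g 0, g 2] (by
    simp only [Fin.sum_univ_three, Matrix.cons_val_zero, Matrix.cons_val_one, Matrix.head_cons,
      Matrix.cons_val_two, Matrix.tail_cons] at hg ⊢
    rw [← hg]; abel)
  intro i
  fin_cases i
  · simpa using h' 1
  · simpa using h' 0
  · simpa using h' 2

lemma li_rot {a b c : E3} (h : LinearIndependent ℝ ![a,b,c]) :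
    LinearIndependent ℝ ![c,a,b] := by
  rw [Fintype.linearIndependent_iff] at h ⊢
  intro g hg
  have h' := h ![g 1, g 2, g 0] (by
    simp only [Fin.sum_univ_three, Matrix.cons_val_zero, Matrix.cons_val_one, Matrix.head_cons,
      Matrix.cons_val_two, Matrix.tail_cons] at hg ⊢
    rw [← hg]; abel)
  intro i
  fin_cases i
  · simpa using h' 2
  · simpa using h' 0
  · simpa using h' 1

lemma sph_swap {r : ℝ} {a b c : E3} (h : SphTriangle r a b c) : SphTriangle r b a c := by
  obtain ⟨ha, hb, hc, h1, h2, h3, h4, h5, h6, h7⟩ := h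
  exact ⟨hb, ha, hc, h1.symm, h3, h2, fun he => h4 (by rw [he, neg_neg]), h6, h5, li_swap h7⟩

lemma sph_rot {r : ℝ} {a b c : E3} (h : SphTriangle r a b c) : SphTriangle r c a b := by
  obtain ⟨ha, hb, hc, h1, h2, h3, h4, h5, h6, h7⟩ := h
  exact ⟨hc, ha, hb, h2.symm, h3.symm, h1, fun he => h5 (by rw [he, neg_neg]),
    fun he => h6 (by rw [he, neg_neg]), h4, li_rot h7⟩

lemma sdist_symm (r : ℝ) (p q : E3) : sdist r p q = sdist r q p := by
  unfold sdist; rw [real_inner_comm]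

lemma angle_decrease (r r' : ℝ) (hr : 0 < r) (hrr' : r < r')
    (a b c a' b' c' : E3)
    (htri : SphTriangle r a b c) (htri' : SphTriangle r' a' b' c')
    (hbc : sdist r b c = sdist r' b' c')
    (hab : sdist r a b = sdist r' a' b')
    (hac : sdist r a c = sdist r' a' c') :
    sAngle b a c > sAngle b' a' c' := by
  obtain ⟨ha, hb, hc, hne1, hne2, hne3, hne4, hne5, hne6, hli⟩ := htri
  obtain ⟨ha', hb', hc', hne1', hne2', hne3', hne4', hne5', hne6', hli'⟩ := htri'
  rw [onSphere] at ha hb hc ha' hb' hc'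
  have hr' : 0 < r' := hr.trans hrr'
  -- inner product bounds
  have Bab := inner_abs_lt hr ha hb hne1 hne4
  have Bac := inner_abs_lt hr ha hc hne2 hne5
  have Bbc := inner_abs_lt hr hb hc hne3 hne6
  have Bab' := inner_abs_lt hr' ha' hb' hne1' hne4'
  have Bac' := inner_abs_lt hr' ha' hc' hne2' hne5'
  have Bbc' := inner_abs_lt hr' hb' hc' hne3' hne6'
  -- normalized inner products
  set x : ℝ := ⟪b, c⟫ / r ^ 2 with hx
  set y : ℝ := ⟪a, b⟫ / r ^ 2 with hy
  set z : ℝ := ⟪a, c⟫ / r ^ 2 with hz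
  set x' : ℝ := ⟪b', c'⟫ / r' ^ 2 with hx'
  set y' : ℝ := ⟪a', b'⟫ / r' ^ 2 with hy'
  set z' : ℝ := ⟪a', c'⟫ / r' ^ 2 with hz'
  have hr2 : (0:ℝ) < r ^ 2 := by positivity
  have hr2' : (0:ℝ) < r' ^ 2 := by positivity
  have hxb : |x| < 1 := by rw [hx, abs_div, abs_of_pos hr2, div_lt_one hr2]; exact Bbc
  have hyb : |y| < 1 := by rw [hy, abs_div, abs_of_pos hr2, div_lt_one hr2]; exact Bab
  have hzb : |z| < 1 := by rw [hz, abs_div, abs_of_pos hr2, div_lt_one hr2]; exact Bac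
  have hxb' : |x'| < 1 := by rw [hx', abs_div, abs_of_pos hr2', div_lt_one hr2']; exact Bbc'
  have hyb' : |y'| < 1 := by rw [hy', abs_div, abs_of_pos hr2', div_lt_one hr2']; exact Bab'
  have hzb' : |z'| < 1 := by rw [hz', abs_div, abs_of_pos hr2', div_lt_one hr2']; exact Bac'
  -- angular side lengths
  set α : ℝ := Real.arccos x with hα
  set β : ℝ := Real.arccos z with hβ
  set γ : ℝ := Real.arccos y with hγ
  obtain ⟨hα0, hαπ⟩ := arccos_mem hxb
  obtain ⟨hβ0, hβπ⟩ := arccos_mem hzb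
  obtain ⟨hγ0, hγπ⟩ := arccos_mem hyb
  -- scale factor
  set l : ℝ := r / r' with hl
  have hl0 : 0 < l := by positivity
  have hl1 : l < 1 := (div_lt_one hr').2 hrr'
  -- primed angular sides are scaled
  have hsc : ∀ {pq p'q' : ℝ}, r * Real.arccos pq = r' * Real.arccos p'q' →
      Real.arccos p'q' = l * Real.arccos pq := by
    intro pq p'q' h
    rw [hl]
    field_simp
    linarith [h]
  have hbc2 : Real.arccos x' = l * α := hsc hbc
  have hab2 : Real.arccos y' = l * γ := hsc hab
  have hac2 : Real.arccos z' = l * β := hsc hac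
  -- recover primed inner products as cosines
  have hxc : x' = Real.cos (l * α) := by
    rw [← hbc2, Real.cos_arccos (abs_lt.1 hxb').1.le (abs_lt.1 hxb').2.le]
  have hyc : y' = Real.cos (l * γ) := by
    rw [← hab2, Real.cos_arccos (abs_lt.1 hyb').1.le (abs_lt.1 hyb').2.le]
  have hzc : z' = Real.cos (l * β) := by
    rw [← hac2, Real.cos_arccos (abs_lt.1 hzb').1.le (abs_lt.1 hzb').2.le]
  have hxcc : x = Real.cos α := (Real.cos_arccos (abs_lt.1 hxb).1.le (abs_lt.1 hxb).2.le).symm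
  have hycc : y = Real.cos γ := (Real.cos_arccos (abs_lt.1 hyb).1.le (abs_lt.1 hyb).2.le).symm
  have hzcc : z = Real.cos β := (Real.cos_arccos (abs_lt.1 hzb).1.le (abs_lt.1 hzb).2.le).symm
  -- laws of cosines, unprimed, at the three vertices
  have LCa := cos_sAngle_eq hr ha hb hc Bab Bac
  have LCb := cos_sAngle_eq hr hb ha hc (by rwa [real_inner_comm]) Bbc
  have LCc := cos_sAngle_eq hr hc ha hb (by rwa [real_inner_comm]) (by rwa [real_inner_comm])
  rw [real_inner_comm a b] at LCb
  rw [real_inner_comm a c, real_inner_comm b c] at LCc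
  rw [← hx, ← hy, ← hz, ← hβ, ← hγ] at LCa
  rw [← hx, ← hy, ← hz, ← hα, ← hγ] at LCb
  rw [← hx, ← hy, ← hz, ← hα, ← hβ] at LCc
  rw [← hα] at hα0 hαπ
  rw [← hβ] at hβ0 hβπ
  rw [← hγ] at hγ0 hγπ
  clear_value x y z x' y' z' α β γ l
  -- nondegeneracy of the three angles
  obtain ⟨nda1, nda2⟩ := sAngle_cos_lt hli
  obtain ⟨ndb1, ndb2⟩ := sAngle_cos_lt (li_swap hli)
  obtain ⟨ndc1, ndc2⟩ := sAngle_cos_lt (li_rot hli)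
  -- positivity of sines
  have sα : 0 < Real.sin α := Real.sin_pos_of_pos_of_lt_pi hα0 hαπ
  have sβ : 0 < Real.sin β := Real.sin_pos_of_pos_of_lt_pi hβ0 hβπ
  have sγ : 0 < Real.sin γ := Real.sin_pos_of_pos_of_lt_pi hγ0 hγπ
  -- triangle inequalities
  have Ta : α < β + γ ∧ α + β + γ < 2 * π := by
    have h1 := mul_lt_mul_of_pos_right nda1 (mul_pos sγ sβ)
    rw [LCa] at h1
    apply tri_of_cos hα0 hαπ hβ0 hβπ hγ0 hγπ
    rw [← hxcc, ← hycc, ← hzcc]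
    linarith only [h1]
  have Tb : β < α + γ := by
    have h1 := mul_lt_mul_of_pos_right ndb1 (mul_pos sγ sα)
    rw [LCb] at h1
    have := tri_of_cos hβ0 hβπ hα0 hαπ hγ0 hγπ (by
      rw [← hxcc, ← hycc, ← hzcc]
      linarith only [h1])
    exact this.1
  have Tc : γ < α + β := by
    have h1 := mul_lt_mul_of_pos_right ndc1 (mul_pos sβ sα)
    rw [LCc] at h1
    have := tri_of_cos hγ0 hγπ hα0 hαπ hβ0 hβπ (by
      rw [← hxcc, ← hycc, ← hzcc]
      linarith only [h1])
    exact this.1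
  -- half-angle decomposition
  set u : ℝ := (β + γ - α)/2 with hu
  set v : ℝ := (α + γ - β)/2 with hv
  set w : ℝ := (α + β - γ)/2 with hw
  have hu0 : 0 < u := by rw [hu]; linarith [Ta.1]
  have hv0 : 0 < v := by rw [hv]; linarith
  have hw0 : 0 < w := by rw [hw]; linarith
  have hsum : u + v + w < π := by rw [hu, hv, hw]; linarith [Ta.2]
  have hαe : α = v + w := by rw [hv, hw]; ring
  have hβe : β = u + w := by rw [hu, hw]; ring
  have hγe : γ = u + v := by rw [hu, hv]; ring
  -- the key strict inequality
  have KEY := sin_ratio hu0 hv0 hw0 hsum hl0 hl1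
  -- law of cosines, primed, at vertex a'
  have LCa' := cos_sAngle_eq hr' ha' hb' hc' Bab' Bac'
  rw [← hy', ← hz', ← hx', hab2, hac2, hxc, hyc, hzc] at LCa'
  -- rewrite unprimed law of cosines
  rw [hxcc, hycc, hzcc] at LCa
  -- identities
  have IDa : Real.cos α - Real.cos γ * Real.cos β
      = Real.sin γ * Real.sin β - 2 * (Real.sin v * Real.sin w) := by
    rw [hαe, hβe, hγe]; exact cos_identity u v w
  have IDa' : Real.cos (l*α) - Real.cos (l*γ) * Real.cos (l*β)
      = Real.sin (l*γ) * Real.sin (l*β) - 2 * (Real.sin (l*v) * Real.sin (l*w)) := by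
    have e1 : l*α = l*v + l*w := by rw [hαe]; ring
    have e2 : l*β = l*u + l*w := by rw [hβe]; ring
    have e3 : l*γ = l*u + l*v := by rw [hγe]; ring
    rw [e1, e2, e3]; exact cos_identity (l*u) (l*v) (l*w)
  -- positivity of primed sines
  have slβ : 0 < Real.sin (l*β) := by
    apply Real.sin_pos_of_pos_of_lt_pi (mul_pos hl0 hβ0)
    calc l*β < 1*β := by apply mul_lt_mul_of_pos_right hl1 hβ0
    _ = β := one_mul β
    _ < π := hβπ
  have slγ : 0 < Real.sin (l*γ) := by
    apply Real.sin_pos_of_pos_of_lt_pi (mul_pos hl0 hγ0)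
    calc l*γ < 1*γ := by apply mul_lt_mul_of_pos_right hl1 hγ0
    _ = γ := one_mul γ
    _ < π := hγπ
  have slv : 0 < Real.sin (l*v) := by
    apply Real.sin_pos_of_pos_of_lt_pi (mul_pos hl0 hv0)
    calc l*v < 1*v := mul_lt_mul_of_pos_right hl1 hv0
    _ = v := one_mul v
    _ < π := by linarith only [hsum, hu0, hw0]
  have slw : 0 < Real.sin (l*w) := by
    apply Real.sin_pos_of_pos_of_lt_pi (mul_pos hl0 hw0)
    calc l*w < 1*w := mul_lt_mul_of_pos_right hl1 hw0
    _ = w := one_mul w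
    _ < π := by linarith only [hsum, hu0, hv0]
  have sv : 0 < Real.sin v := by
    apply Real.sin_pos_of_pos_of_lt_pi hv0; linarith only [hsum, hu0, hw0]
  have sw : 0 < Real.sin w := by
    apply Real.sin_pos_of_pos_of_lt_pi hw0; linarith only [hsum, hu0, hv0]
  -- compare cosines
  have hcoslt : Real.cos (sAngle b a c) < Real.cos (sAngle b' a' c') := by
    rw [IDa] at LCa
    rw [IDa'] at LCa'
    have hS : 0 < Real.sin γ * Real.sin β := mul_pos sγ sβ
    have hS' : 0 < Real.sin (l*γ) * Real.sin (l*β) := mul_pos slγ slβ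
    have eA : Real.cos (sAngle b a c)
        = (Real.sin γ * Real.sin β - 2 * (Real.sin v * Real.sin w))
          / (Real.sin γ * Real.sin β) := by
      rw [eq_div_iff hS.ne']; exact LCa
    have eA' : Real.cos (sAngle b' a' c')
        = (Real.sin (l*γ) * Real.sin (l*β) - 2 * (Real.sin (l*v) * Real.sin (l*w)))
          / (Real.sin (l*γ) * Real.sin (l*β)) := by
      rw [eq_div_iff hS'.ne']; exact LCa'
    rw [eA, eA', div_lt_div_iff₀ hS hS']
    -- KEY : sin(l*v)*sin(l*w)*(sin(u+w)*sin(u+v)) < sin v*sin w*(sin(l*(u+w))*sin(l*(u+v)))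
    rw [← hβe, ← hγe] at KEY
    linarith only [KEY]
  -- conclude
  by_contra hcon
  push_neg at hcon
  have hle : Real.cos (sAngle b' a' c') ≤ Real.cos (sAngle b a c) :=
    Real.cos_le_cos_of_nonneg_of_le_pi (InnerProductGeometry.angle_nonneg _ _)
      (InnerProductGeometry.angle_le_pi _ _) hcon
  linarith only [hle, hcoslt]

/-- **Lemma 6**: every angle of a geodesic triangle strictly decreases when the triangle
is redrawn, with the same three side lengths, on a larger sphere.  Here `T = △abc` lies
on the sphere `S_r` and `T' = △a'b'c'` lies on `S_{r'}` with `r < r'`, with sides of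
equal length corresponding to each other. -/
theorem triangle_angles_shrink_on_larger_sphere (r r' : ℝ) (hr : 0 < r) (hrr' : r < r')
    (a b c a' b' c' : E3)
    (htri : SphTriangle r a b c) (htri' : SphTriangle r' a' b' c')
    (hbc : sdist r b c = sdist r' b' c')
    (hab : sdist r a b = sdist r' a' b')
    (hac : sdist r a c = sdist r' a' c') :
    sAngle b a c > sAngle b' a' c' ∧
    sAngle a b c > sAngle a' b' c' ∧
    sAngle a c b > sAngle a' c' b' := by
  refine ⟨angle_decrease r r' hr hrr' a b c a' b' c' htri htri' hbc hab hac, ?_, ?_⟩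
  · exact angle_decrease r r' hr hrr' b a c b' a' c' (sph_swap htri) (sph_swap htri')
      hac (by rw [sdist_symm r b a, sdist_symm r' b' a']; exact hab) hbc
  · exact angle_decrease r r' hr hrr' c a b c' a' b' (sph_rot htri) (sph_rot htri')
      hab (by rw [sdist_symm r c a, sdist_symm r' c' a']; exact hac)
      (by rw [sdist_symm r c b, sdist_symm r' c' b']; exact hbc)
end
end

section
/- Let T be a geodesic triangle on the sphere S_r (r > 0) with side lengths A, B, C and angles θ₁, θ₂, θ₃, and let T′ be a geodesic triangle in the hyperbolic plane (the upper half-plane with its Poincaré metric of constant curvature −1) with the same side lengths A, B, C, with corresponding angles θ₁′, θ₂′, θ₃′ (opposite sides of equal length). Then θᵢ > θᵢ′ for each i ∈ {1,2,3}. -/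
noncomputable section

/-- The hyperbolic angle of a geodesic triangle in the upper half-plane (with its
Poincaré metric of constant curvature `−1`, which is the distance carried by Mathlib's
`MetricSpace UpperHalfPlane` instance) at the vertex `z`, between the geodesic sides
from `z` to `w` and from `z` to `u`.  It is computed from the side lengths by the
hyperbolic law of cosines, which agrees with the angle between the initial tangent
vectors of the two sides at `z`. -/
def hypAngle (z w u : UpperHalfPlane) : ℝ :=
  Real.arccos ((Real.cosh (dist z w) * Real.cosh (dist z u) - Real.cosh (dist w u)) /
    (Real.sinh (dist z w) * Real.sinh (dist z u)))

/-- A geodesic triangle in the hyperbolic plane: three points, pairwise distinct and not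
all on a common geodesic; in the hyperbolic plane this is equivalent to the three
pairwise distances satisfying the strict triangle inequality. -/
def HypTriangle (z w u : UpperHalfPlane) : Prop :=
  dist w u < dist z w + dist z u ∧
  dist z u < dist z w + dist w u ∧
  dist z w < dist z u + dist w u

open Real

section ToponogovAux


lemma tmul_cos_lt_sin {x : ℝ} (h0 : 0 < x) (hπ : x < π) : x * Real.cos x < Real.sin x := by
  rcases lt_or_ge x (π/2) with h | h
  · have hc : 0 < Real.cos x := Real.cos_pos_of_mem_Ioo ⟨by linarith [Real.pi_pos], h⟩
    have ht := Real.lt_tan h0 h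
    have h2 : x * Real.cos x < Real.tan x * Real.cos x :=
      mul_lt_mul_of_pos_right ht hc
    rwa [Real.tan_eq_sin_div_cos, div_mul_cancel₀ _ (ne_of_gt hc)] at h2
  · have hc : Real.cos x ≤ 0 :=
      Real.cos_nonpos_of_pi_div_two_le_of_le h (by linarith [Real.pi_pos])
    have hs : 0 < Real.sin x := Real.sin_pos_of_pos_of_lt_pi h0 hπ
    nlinarith

lemma sinc_lt {x y : ℝ} (hx : 0 < x) (hxy : x < y) (hy : y ≤ π) :
    Real.sin y / y < Real.sin x / x := by
  have H : StrictAntiOn (fun t => Real.sin t / t) (Set.Ioc 0 π) := by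
    apply strictAntiOn_of_deriv_neg (convex_Ioc 0 π)
    · exact Real.continuous_sin.continuousOn.div continuousOn_id fun t ht => ne_of_gt ht.1
    · intro t ht
      rw [interior_Ioc] at ht
      have hd : HasDerivAt (fun t => Real.sin t / t)
          ((Real.cos t * t - Real.sin t * 1) / t ^ 2) t :=
        (Real.hasDerivAt_sin t).div (hasDerivAt_id t) (ne_of_gt ht.1)
      rw [hd.deriv]
      apply div_neg_of_neg_of_pos
      · have := tmul_cos_lt_sin ht.1 ht.2; nlinarith
      · exact pow_pos ht.1 2
  exact H ⟨hx, hxy.le.trans hy⟩ ⟨hx.trans hxy, hy⟩ hxy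

lemma self_cosh_gt_sinh {x : ℝ} (hx : 0 < x) : Real.sinh x < x * Real.cosh x := by
  have H : StrictMonoOn (fun t => t * Real.cosh t - Real.sinh t) (Set.Ici 0) := by
    apply strictMonoOn_of_deriv_pos (convex_Ici 0)
    · exact Continuous.continuousOn (by continuity)
    · intro t ht
      rw [interior_Ici] at ht
      have hd : HasDerivAt (fun t => t * Real.cosh t - Real.sinh t)
          (1 * Real.cosh t + t * Real.sinh t - Real.cosh t) t :=
        ((hasDerivAt_id t).mul (Real.hasDerivAt_cosh t)).sub (Real.hasDerivAt_sinh t)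
      rw [hd.deriv]
      have h2 : 0 < t * Real.sinh t := mul_pos ht (by rwa [Real.sinh_pos_iff])
      linarith
  have h3 := H Set.self_mem_Ici (Set.mem_Ici.mpr hx.le) hx
  simpa using h3

lemma sinhc_lt {x y : ℝ} (hx : 0 < x) (hxy : x < y) :
    Real.sinh x / x < Real.sinh y / y := by
  have H : StrictMonoOn (fun t => Real.sinh t / t) (Set.Ioi 0) := by
    apply strictMonoOn_of_deriv_pos (convex_Ioi 0)
    · exact Real.continuous_sinh.continuousOn.div continuousOn_id fun t ht => ne_of_gt ht
    · intro t ht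
      rw [interior_Ioi] at ht
      have ht0 : (0:ℝ) < t := ht
      have hd : HasDerivAt (fun t => Real.sinh t / t)
          ((Real.cosh t * t - Real.sinh t * 1) / t ^ 2) t :=
        (Real.hasDerivAt_sinh t).div (hasDerivAt_id t) (ne_of_gt ht0)
      rw [hd.deriv]
      apply div_pos
      · have := self_cosh_gt_sinh ht0; nlinarith
      · exact pow_pos ht0 2
  exact H (Set.mem_Ioi.mpr hx) (Set.mem_Ioi.mpr (hx.trans hxy)) hxy

lemma sph_key {α β γ : ℝ} (hβ0 : 0 < β) (hβπ : β < π) (hγ0 : 0 < γ) (hγπ : γ < π)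
    (hα0 : 0 < α) (hαπ : α < π) (h1 : α < β + γ) (h2 : β < α + γ) (h3 : γ < α + β) :
    Real.cos α < Real.cos β * Real.cos γ +
      Real.sin β * Real.sin γ * ((β ^ 2 + γ ^ 2 - α ^ 2) / (2 * β * γ)) := by
  set K : ℝ := Real.sin β * Real.sin γ / (β * γ) with hK
  have hKpos : 0 < K := div_pos (mul_pos (Real.sin_pos_of_pos_of_lt_pi hβ0 hβπ)
    (Real.sin_pos_of_pos_of_lt_pi hγ0 hγπ)) (mul_pos hβ0 hγ0)
  have hKβγ : β * γ * K = Real.sin β * Real.sin γ := by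
    rw [hK]; field_simp
  have key : Real.sin β * Real.sin γ * ((β ^ 2 + γ ^ 2 - α ^ 2) / (2 * β * γ))
      = (β ^ 2 + γ ^ 2 - α ^ 2) * (K / 2) := by
    rw [hK]; field_simp
  rw [key]
  set ψ : ℝ → ℝ := fun x =>
    Real.cos β * Real.cos γ + (β ^ 2 + γ ^ 2 - x ^ 2) * (K / 2) - Real.cos x with hψ
  by_contra hcon
  push_neg at hcon
  have hψα : ψ α ≤ 0 := by rw [hψ]; simp only; linarith
  have hd : ∀ x : ℝ, HasDerivAt ψ (Real.sin x - K * x) x := by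
    intro x
    rw [hψ]
    have h1' : HasDerivAt (fun x : ℝ => β ^ 2 + γ ^ 2 - x ^ 2) (-(2 * x)) x := by
      simpa using (HasDerivAt.const_sub (β ^ 2 + γ ^ 2) (hasDerivAt_pow 2 x))
    have h2' := ((h1'.mul_const (K / 2)).const_add (Real.cos β * Real.cos γ)).sub
      (Real.hasDerivAt_cos x)
    exact h2'.congr_deriv (by ring)
  have hcont : ∀ s t : ℝ, ContinuousOn ψ (Set.Icc s t) :=
    fun s t => fun x _ => (hd x).continuousAt.continuousWithinAt
  -- left endpoint
  have hL0 : (0:ℝ) ≤ |β - γ| := abs_nonneg _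
  have hLα : |β - γ| < α := abs_sub_lt_iff.mpr ⟨by linarith, by linarith⟩
  have hψL : ψ (|β - γ|) = 0 := by
    rw [hψ]; simp only
    rw [Real.cos_abs, Real.cos_sub, sq_abs]
    linear_combination hKβγ
  -- right endpoint
  set R : ℝ := min (β + γ) π with hR
  have hαR : α < R := lt_min h1 hαπ
  have hRπ : R ≤ π := min_le_right _ _
  have hψR : 0 ≤ ψ R := by
    rcases le_total (β + γ) π with hbc | hbc
    · have : ψ (β + γ) = 0 := by
        rw [hψ]; simp only
        rw [Real.cos_add]
        linear_combination -hKβγ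
      rw [hR, min_eq_left hbc, this]
    · rw [hR, min_eq_right hbc, hψ]; simp only
      rw [Real.cos_pi]
      have h2βγ : -(2 * (β * γ)) ≤ β ^ 2 + γ ^ 2 - π ^ 2 := by nlinarith
      have h5 : (-(2 * (β * γ))) * (K / 2) ≤ (β ^ 2 + γ ^ 2 - π ^ 2) * (K / 2) :=
        mul_le_mul_of_nonneg_right h2βγ (by positivity)
      have e1 : (-(2 * (β * γ))) * (K / 2) = -(Real.sin β * Real.sin γ) := by
        linear_combination -hKβγ
      have hge : 0 ≤ Real.cos β * Real.cos γ - Real.sin β * Real.sin γ + 1 := by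
        have h6 := Real.neg_one_le_cos (β + γ)
        rw [Real.cos_add] at h6
        linarith
      linarith
  -- MVT twice
  obtain ⟨ξ₁, hξ₁mem, hξ₁⟩ := exists_hasDerivAt_eq_slope ψ (fun x => Real.sin x - K * x)
    hLα (hcont _ _) (fun x _ => hd x)
  obtain ⟨ξ₂, hξ₂mem, hξ₂⟩ := exists_hasDerivAt_eq_slope ψ (fun x => Real.sin x - K * x)
    hαR (hcont _ _) (fun x _ => hd x)
  have hξ₁0 : 0 < ξ₁ := lt_of_le_of_lt hL0 hξ₁mem.1
  have hs1 : Real.sin ξ₁ - K * ξ₁ ≤ 0 := by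
    rw [hξ₁, hψL]
    apply div_nonpos_of_nonpos_of_nonneg (by linarith) (by linarith [hξ₁mem.2, hLα])
  have hs2 : 0 ≤ Real.sin ξ₂ - K * ξ₂ := by
    rw [hξ₂]
    apply div_nonneg (by linarith) (by linarith [hξ₂mem.1, hαR])
  have hd1 : Real.sin ξ₁ / ξ₁ ≤ K := by
    rw [div_le_iff₀ hξ₁0]; linarith
  have hd2 : K ≤ Real.sin ξ₂ / ξ₂ := by
    rw [le_div_iff₀ (by linarith [hξ₂mem.1, hξ₁0, hξ₁mem.2] : (0:ℝ) < ξ₂)]; linarith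
  have := sinc_lt hξ₁0 (hξ₁mem.2.trans hξ₂mem.1) (le_trans hξ₂mem.2.le hRπ)
  linarith

lemma hyp_key {A B C : ℝ} (hB0 : 0 < B) (hC0 : 0 < C)
    (h1 : A < B + C) (h2 : B < A + C) (h3 : C < A + B) :
    Real.cosh A < Real.cosh B * Real.cosh C -
      Real.sinh B * Real.sinh C * ((B ^ 2 + C ^ 2 - A ^ 2) / (2 * B * C)) := by
  have hA0 : 0 < A := by linarith
  set K : ℝ := Real.sinh B * Real.sinh C / (B * C) with hK
  have hKpos : 0 < K := div_pos (mul_pos (Real.sinh_pos_iff.mpr hB0)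
    (Real.sinh_pos_iff.mpr hC0)) (mul_pos hB0 hC0)
  have hKBC : B * C * K = Real.sinh B * Real.sinh C := by
    rw [hK]; field_simp
  have key : Real.sinh B * Real.sinh C * ((B ^ 2 + C ^ 2 - A ^ 2) / (2 * B * C))
      = (B ^ 2 + C ^ 2 - A ^ 2) * (K / 2) := by
    rw [hK]; field_simp
  rw [key]
  set φ : ℝ → ℝ := fun x =>
    Real.cosh B * Real.cosh C - (B ^ 2 + C ^ 2 - x ^ 2) * (K / 2) - Real.cosh x with hφ
  by_contra hcon
  push_neg at hcon
  have hφA : φ A ≤ 0 := by rw [hφ]; simp only; linarith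
  have hd : ∀ x : ℝ, HasDerivAt φ (K * x - Real.sinh x) x := by
    intro x
    rw [hφ]
    have h1' : HasDerivAt (fun x : ℝ => B ^ 2 + C ^ 2 - x ^ 2) (-(2 * x)) x := by
      simpa using (HasDerivAt.const_sub (B ^ 2 + C ^ 2) (hasDerivAt_pow 2 x))
    have h2' := (HasDerivAt.const_sub (Real.cosh B * Real.cosh C)
      (h1'.mul_const (K / 2))).sub (Real.hasDerivAt_cosh x)
    exact h2'.congr_deriv (by ring)
  have hcont : ∀ s t : ℝ, ContinuousOn φ (Set.Icc s t) :=
    fun s t => fun x _ => (hd x).continuousAt.continuousWithinAt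
  have hL0 : (0:ℝ) ≤ |B - C| := abs_nonneg _
  have hLA : |B - C| < A := abs_sub_lt_iff.mpr ⟨by linarith, by linarith⟩
  have hφL : φ (|B - C|) = 0 := by
    rw [hφ]; simp only
    rw [Real.cosh_abs, Real.cosh_sub, sq_abs]
    linear_combination -hKBC
  have hAR : A < B + C := h1
  have hφR : φ (B + C) = 0 := by
    rw [hφ]; simp only
    rw [Real.cosh_add]
    linear_combination hKBC
  obtain ⟨ξ₁, hξ₁mem, hξ₁⟩ := exists_hasDerivAt_eq_slope φ (fun x => K * x - Real.sinh x)
    hLA (hcont _ _) (fun x _ => hd x)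
  obtain ⟨ξ₂, hξ₂mem, hξ₂⟩ := exists_hasDerivAt_eq_slope φ (fun x => K * x - Real.sinh x)
    hAR (hcont _ _) (fun x _ => hd x)
  have hξ₁0 : 0 < ξ₁ := lt_of_le_of_lt hL0 hξ₁mem.1
  have hs1 : K * ξ₁ - Real.sinh ξ₁ ≤ 0 := by
    rw [hξ₁, hφL]
    apply div_nonpos_of_nonpos_of_nonneg (by linarith) (by linarith [hξ₁mem.2, hLA])
  have hs2 : 0 ≤ K * ξ₂ - Real.sinh ξ₂ := by
    rw [hξ₂, hφR]
    apply div_nonneg (by linarith) (by linarith [hξ₂mem.1, hAR])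
  have hd1 : K ≤ Real.sinh ξ₁ / ξ₁ := by
    rw [le_div_iff₀ hξ₁0]; linarith
  have hd2 : Real.sinh ξ₂ / ξ₂ ≤ K := by
    rw [div_le_iff₀ (by linarith [hξ₂mem.1, hξ₁0, hξ₁mem.2] : (0:ℝ) < ξ₂)]; linarith
  have := sinhc_lt hξ₁0 (hξ₁mem.2.trans hξ₂mem.1)
  linarith

lemma inner_lt_sq {r : ℝ} (hr : 0 < r) {p q : E3} (hp : ‖p‖ = r) (hq : ‖q‖ = r)
    (hpq : p ≠ q) : (inner ℝ p q : ℝ) < r ^ 2 := by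
  have hle : (inner ℝ p q : ℝ) ≤ r ^ 2 := by
    have h := real_inner_le_norm p q
    rw [hp, hq] at h
    nlinarith
  rcases hle.lt_or_eq with h | h
  · exact h
  · exfalso
    have h2 : (inner ℝ p q : ℝ) = ‖p‖ * ‖q‖ := by rw [hp, hq]; nlinarith
    have h3 := inner_eq_norm_mul_iff_real.mp h2
    rw [hp, hq] at h3
    exact hpq (smul_right_injective E3 (ne_of_gt hr) h3)

lemma neg_sq_lt_inner {r : ℝ} (hr : 0 < r) {p q : E3} (hp : ‖p‖ = r) (hq : ‖q‖ = r)
    (hpq : p ≠ -q) : -r ^ 2 < (inner ℝ p q : ℝ) := by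
  have hq' : ‖(-q : E3)‖ = r := by rw [norm_neg]; exact hq
  have := inner_lt_sq hr hp hq' hpq
  rw [inner_neg_right] at this
  linarith

set_option maxHeartbeats 2000000 in
lemma master {r : ℝ} (hr : 0 < r) {a b c : E3} (ha : ‖a‖ = r) (hb : ‖b‖ = r) (hc : ‖c‖ = r)
    (hab : a ≠ b) (hab' : a ≠ -b) (hac : a ≠ c) (hac' : a ≠ -c) (hbc : b ≠ c) (hbc' : b ≠ -c)
    {z w u : UpperHalfPlane}
    (d1 : dist w u < dist z w + dist z u) (d2 : dist z u < dist z w + dist w u)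
    (d3 : dist z w < dist z u + dist w u)
    (hA : sdist r b c = dist w u) (hB : sdist r a c = dist z u)
    (hC : sdist r a b = dist z w) :
    hypAngle z w u < sAngle b a c := by
  have hr2 : (0:ℝ) < r ^ 2 := by positivity
  set xab : ℝ := (inner ℝ a b : ℝ) / r ^ 2 with hxab
  set xac : ℝ := (inner ℝ a c : ℝ) / r ^ 2 with hxac
  set xbc : ℝ := (inner ℝ b c : ℝ) / r ^ 2 with hxbc
  have hxab1 : xab < 1 := (div_lt_one hr2).mpr (inner_lt_sq hr ha hb hab)
  have hxabm : -1 < xab := by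
    rw [hxab, lt_div_iff₀ hr2]
    have := neg_sq_lt_inner hr ha hb hab'
    linarith
  have hxac1 : xac < 1 := (div_lt_one hr2).mpr (inner_lt_sq hr ha hc hac)
  have hxacm : -1 < xac := by
    rw [hxac, lt_div_iff₀ hr2]
    have := neg_sq_lt_inner hr ha hc hac'
    linarith
  have hxbc1 : xbc < 1 := (div_lt_one hr2).mpr (inner_lt_sq hr hb hc hbc)
  have hxbcm : -1 < xbc := by
    rw [hxbc, lt_div_iff₀ hr2]
    have := neg_sq_lt_inner hr hb hc hbc'
    linarith
  set cab : ℝ := Real.arccos xab with hcab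
  set cac : ℝ := Real.arccos xac with hcac
  set cbc : ℝ := Real.arccos xbc with hcbc
  have hcab0 : 0 < cab := Real.arccos_pos.mpr hxab1
  have hcac0 : 0 < cac := Real.arccos_pos.mpr hxac1
  have hcbc0 : 0 < cbc := Real.arccos_pos.mpr hxbc1
  have hcabπ : cab < π := lt_of_le_of_ne (Real.arccos_le_pi _)
    (fun h => by have := Real.arccos_eq_pi.mp h; linarith)
  have hcacπ : cac < π := lt_of_le_of_ne (Real.arccos_le_pi _)
    (fun h => by have := Real.arccos_eq_pi.mp h; linarith)
  have hcbcπ : cbc < π := lt_of_le_of_ne (Real.arccos_le_pi _)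
    (fun h => by have := Real.arccos_eq_pi.mp h; linarith)
  -- distances
  have hdzw : dist z w = r * cab := by rw [← hC]; rfl
  have hdzu : dist z u = r * cac := by rw [← hB]; rfl
  have hdwu : dist w u = r * cbc := by rw [← hA]; rfl
  -- triangle inequalities for the arc angles
  have t1 : cbc < cab + cac := by
    rw [hdwu, hdzw, hdzu, ← mul_add] at d1
    exact lt_of_mul_lt_mul_left d1 hr.le
  have t2 : cac < cab + cbc := by
    rw [hdwu, hdzw, hdzu, ← mul_add] at d2
    exact lt_of_mul_lt_mul_left d2 hr.le
  have t3 : cab < cac + cbc := by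
    rw [hdwu, hdzw, hdzu, ← mul_add] at d3
    exact lt_of_mul_lt_mul_left d3 hr.le
  -- inner products of tangent vectors
  have hra : ‖a‖ ^ 2 = r ^ 2 := by rw [ha]
  have hip : (inner ℝ (sTangent a b) (sTangent a c) : ℝ) = r ^ 2 * (xbc - xab * xac) := by
    rw [sTangent, sTangent, hxbc, hxab, hxac]
    rw [inner_sub_left, inner_sub_right, inner_sub_right, real_inner_smul_left,
      real_inner_smul_left, real_inner_smul_right, real_inner_smul_right,
      real_inner_self_eq_norm_sq, hra]
    rw [real_inner_comm b a, real_inner_comm c a]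
    field_simp
    ring
  have hnab : ‖sTangent a b‖ = r * Real.sqrt (1 - xab ^ 2) := by
    have hself : (inner ℝ (sTangent a b) (sTangent a b) : ℝ) = r ^ 2 * (1 - xab ^ 2) := by
      rw [sTangent, hxab]
      rw [inner_sub_left, inner_sub_right, inner_sub_right, real_inner_smul_left,
        real_inner_smul_left, real_inner_smul_right, real_inner_smul_right,
        real_inner_self_eq_norm_sq, hra]
      rw [real_inner_comm b a,
        show ((inner ℝ a a : ℝ)) = r ^ 2 from by rw [real_inner_self_eq_norm_sq, hra], hb]
      field_simp
      ring
    rw [norm_eq_sqrt_real_inner, hself, Real.sqrt_mul (by positivity), Real.sqrt_sq hr.le]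
  have hnac : ‖sTangent a c‖ = r * Real.sqrt (1 - xac ^ 2) := by
    have hself : (inner ℝ (sTangent a c) (sTangent a c) : ℝ) = r ^ 2 * (1 - xac ^ 2) := by
      rw [sTangent, hxac]
      rw [inner_sub_left, inner_sub_right, inner_sub_right, real_inner_smul_left,
        real_inner_smul_left, real_inner_smul_right, real_inner_smul_right,
        real_inner_self_eq_norm_sq, hra]
      rw [real_inner_comm c a,
        show ((inner ℝ a a : ℝ)) = r ^ 2 from by rw [real_inner_self_eq_norm_sq, hra], hc]
      field_simp
      ring
    rw [norm_eq_sqrt_real_inner, hself, Real.sqrt_mul (by positivity), Real.sqrt_sq hr.le]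
  have hsqab : 0 < Real.sqrt (1 - xab ^ 2) := Real.sqrt_pos.mpr (by nlinarith)
  have hsqac : 0 < Real.sqrt (1 - xac ^ 2) := Real.sqrt_pos.mpr (by nlinarith)
  have hcos : Real.cos (sAngle b a c)
      = (xbc - xab * xac) / (Real.sqrt (1 - xac ^ 2) * Real.sqrt (1 - xab ^ 2)) := by
    rw [sAngle, InnerProductGeometry.cos_angle, hip, hnab, hnac]
    rw [div_eq_div_iff (by positivity) (by positivity)]
    ring
  -- spherical law of cosines comparison
  set t : ℝ := (cac ^ 2 + cab ^ 2 - cbc ^ 2) / (2 * cac * cab) with ht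
  have hcosab : Real.cos cab = xab := by rw [hcab]; exact Real.cos_arccos hxabm.le hxab1.le
  have hcosac : Real.cos cac = xac := by rw [hcac]; exact Real.cos_arccos hxacm.le hxac1.le
  have hcosbc : Real.cos cbc = xbc := by rw [hcbc]; exact Real.cos_arccos hxbcm.le hxbc1.le
  have hsinab : Real.sin cab = Real.sqrt (1 - xab ^ 2) := by rw [hcab]; exact Real.sin_arccos xab
  have hsinac : Real.sin cac = Real.sqrt (1 - xac ^ 2) := by rw [hcac]; exact Real.sin_arccos xac
  have hsph := sph_key hcac0 hcacπ hcab0 hcabπ hcbc0 hcbcπ (by linarith) (by linarith) (by linarith)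
  rw [hcosbc, hcosac, hcosab, hsinac, hsinab, ← ht] at hsph
  have hXs : Real.cos (sAngle b a c) < t := by
    rw [hcos, div_lt_iff₀ (by positivity)]
    linarith only [hsph]
  -- hyperbolic law of cosines comparison
  have hBpos : 0 < dist z w := by rw [hdzw]; positivity
  have hCpos : 0 < dist z u := by rw [hdzu]; positivity
  have hApos : 0 < dist w u := by rw [hdwu]; positivity
  have hsinhB : 0 < Real.sinh (dist z w) := Real.sinh_pos_iff.mpr hBpos
  have hsinhC : 0 < Real.sinh (dist z u) := Real.sinh_pos_iff.mpr hCpos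
  have hhyp := hyp_key hBpos hCpos d1 (by linarith) (by linarith)
  set Xh : ℝ := (Real.cosh (dist z w) * Real.cosh (dist z u) - Real.cosh (dist w u)) /
    (Real.sinh (dist z w) * Real.sinh (dist z u)) with hXhdef
  have hteq : ((dist z w) ^ 2 + (dist z u) ^ 2 - (dist w u) ^ 2)
      / (2 * dist z w * dist z u) = t := by
    rw [hdzw, hdzu, hdwu, ht]
    have hrne : r ≠ 0 := ne_of_gt hr
    field_simp
    ring
  have hXht : t < Xh := by
    rw [hXhdef, lt_div_iff₀ (by positivity)]
    rw [hteq] at hhyp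
    linarith only [hhyp]
  -- Xh ≤ 1
  have hXh1 : Xh ≤ 1 := by
    rw [hXhdef, div_le_one (by positivity)]
    have habs : |dist z w - dist z u| < |dist w u| := by
      rw [abs_of_pos hApos, abs_sub_lt_iff]
      constructor <;> linarith
    have hcosh := Real.cosh_lt_cosh.mpr habs
    have := Real.cosh_sub (dist z w) (dist z u)
    linarith only [hcosh, this]
  -- conclude via arccos
  have hangle_mem : sAngle b a c = Real.arccos (Real.cos (sAngle b a c)) :=
    (Real.arccos_cos (InnerProductGeometry.angle_nonneg _ _)
      (InnerProductGeometry.angle_le_pi _ _)).symm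
  have hXsm : -1 ≤ Real.cos (sAngle b a c) := Real.neg_one_le_cos _
  have hfinal : Real.arccos Xh < Real.arccos (Real.cos (sAngle b a c)) := by
    apply Real.strictAntiOn_arccos ⟨hXsm, (Real.cos_le_one _)⟩
      ⟨by linarith, hXh1⟩ (by linarith)
  rw [hypAngle, ← hXhdef, hangle_mem]
  exact hfinal

end ToponogovAux

/-- **Corollary 7 with curvatures `κ = 1/r²`, `κ' = −1`** (via Toponogov's Comparison
Theorem): redrawing a spherical triangle with the same side lengths in the hyperbolic
plane strictly decreases every angle.  Here `T = △abc` is a geodesic triangle on the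
sphere `S_r` with side lengths `A = d_r(b,c)`, `B = d_r(a,c)`, `C = d_r(a,b)` and angles
`θ₁, θ₂, θ₃` at `a, b, c`, and `T' = △zwu` is a geodesic triangle in the upper
half-plane with the same side lengths, with corresponding angles `θ₁', θ₂', θ₃'`
(opposite sides of equal length).  Then `θᵢ > θᵢ'` for each `i`. -/
theorem spherical_angles_gt_hyperbolic_angles (r : ℝ) (hr : 0 < r)
    (a b c : E3) (htri : SphTriangle r a b c)
    (z w u : UpperHalfPlane) (htri' : HypTriangle z w u)
    (hA : sdist r b c = dist w u)
    (hB : sdist r a c = dist z u)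
    (hC : sdist r a b = dist z w) :
    sAngle b a c > hypAngle z w u ∧
    sAngle a b c > hypAngle w z u ∧
    sAngle a c b > hypAngle u z w := by
  obtain ⟨ha, hb, hc, hab, hac, hbc, hab', hac', hbc', -⟩ := htri
  obtain ⟨d1, d2, d3⟩ := htri'
  have sdc : ∀ p q : E3, sdist r p q = sdist r q p := fun p q => by
    rw [sdist, sdist, real_inner_comm]
  have nsymm : ∀ p q : E3, p ≠ -q → q ≠ -p := fun p q h h' => h (by rw [h', neg_neg])
  refine ⟨?_, ?_, ?_⟩
  · exact master hr ha hb hc hab hab' hac hac' hbc hbc' d1 d2 d3 hA hB hC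
  · refine master hr hb ha hc hab.symm (nsymm a b hab') hbc hbc' hac hac'
      (by rw [dist_comm w z]; linarith)
      (by rw [dist_comm w z]; linarith)
      (by rw [dist_comm w z]; linarith)
      hB hA (by rw [sdc b a, dist_comm w z]; exact hC)
  · refine master hr hc ha hb hac.symm (nsymm a c hac') hbc.symm (nsymm b c hbc') hab hab'
      (by rw [dist_comm u z, dist_comm u w]; linarith)
      (by rw [dist_comm u z, dist_comm u w]; linarith)
      (by rw [dist_comm u z, dist_comm u w]; linarith)
      hC (by rw [sdc c b, dist_comm u w]; exact hA)
      (by rw [sdc c a, dist_comm u z]; exact hB)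
end
end
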